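/- For every a ∈ ℝ ∪ {∞}, the set J_a of all tropical polynomials f ∈ R̄[x] such that a ∈ V(f) (i.e., f(a) = ∞ or the minimum in f(a) is achieved at least twice) is a prime ideal of the semiring R̄[x]. -/

import Mathlib

open Polynomial

/-- The tropical semiring `ℝ ∪ {∞}` with `⊕ = min` and `⊙ = +`. -/
abbrev TropR : Type := Tropical (WithTop ℝ)

/-- The value of the `i`-th term `bᵢ ⊙ aⁱ` of the tropical polynomial `f` at `a`. -/
noncomputable def trmVal (f : Polynomial TropR) (a : WithTop ℝ) (i : ℕ) : TropR :=
  f.coeff i * Tropical.trop a ^ i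

/-- The tropical variety `V(f) ⊆ ℝ ∪ {∞}` of a univariate tropical polynomial:
the points `a` with `f(a) = ∞` or where the minimum defining `f(a)` is attained by at
least two terms. -/
noncomputable def tropVa (f : Polynomial TropR) : Set (WithTop ℝ) :=
  {a | f.eval (Tropical.trop a) = 0 ∨
    ∃ i j : ℕ, i ≠ j ∧ trmVal f a i = f.eval (Tropical.trop a) ∧
      trmVal f a j = f.eval (Tropical.trop a)}

open Tropical

/-- `f(a)` is the tropical sum (minimum) of its terms over `0, …, natDegree f`. -/
lemma ev_eq_sum (f : Polynomial TropR) (a : WithTop ℝ) :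
    f.eval (trop a) = ∑ i ∈ Finset.range (f.natDegree + 1), trmVal f a i :=
  eval_eq_sum_range _

/-- Each term value bounds the evaluation from above in the tropical (min) order. -/
lemma ev_le (f : Polynomial TropR) (a : WithTop ℝ) (i : ℕ) :
    f.eval (trop a) ≤ trmVal f a i := by
  by_cases hi : i ≤ f.natDegree
  · rw [ev_eq_sum, ← Tropical.untrop_le_iff, Finset.untrop_sum']
    exact Finset.inf_le (by simp; omega)
  · have h : f.coeff i = 0 := coeff_eq_zero_of_natDegree_lt (by omega)
    simp [trmVal, h, Tropical.le_zero]

/-- The minimum defining `f(a)` is attained by some term. -/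
lemma exists_ev (f : Polynomial TropR) (a : WithTop ℝ) :
    ∃ i, trmVal f a i = f.eval (trop a) := by
  have h : (Finset.range (f.natDegree + 1)).Nonempty := Finset.nonempty_range_add_one
  obtain ⟨i, hi, hval⟩ := Finset.exists_mem_eq_inf' h (fun i => untrop (trmVal f a i))
  refine ⟨i, untrop_injective ?_⟩
  rw [ev_eq_sum, Finset.untrop_sum', ← Finset.inf'_eq_inf h, ← hval]
  rfl

lemma trmVal_mul (f g : Polynomial TropR) (a : WithTop ℝ) (k : ℕ) :
    trmVal (f * g) a k =
      ∑ p ∈ Finset.HasAntidiagonal.antidiagonal k, trmVal f a p.1 * trmVal g a p.2 := by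
  unfold trmVal
  rw [coeff_mul, Finset.sum_mul]
  refine Finset.sum_congr rfl fun p hp => ?_
  rw [Finset.HasAntidiagonal.mem_antidiagonal] at hp
  rw [← hp, pow_add]; ring

lemma sum_le_of_mem {s : Finset (ℕ × ℕ)} {h : ℕ × ℕ → TropR} {p : ℕ × ℕ} (hp : p ∈ s) :
    (∑ q ∈ s, h q) ≤ h p := by
  rw [← Tropical.untrop_le_iff, Finset.untrop_sum']
  exact Finset.inf_le hp

lemma mul_lt_left {x x' y y' : TropR} (h1 : x < x') (h2 : y ≤ y') (h0 : x * y ≠ 0) :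
    x * y < x' * y' := by
  rw [← Tropical.untrop_lt_iff, Tropical.untrop_mul, Tropical.untrop_mul]
  have hy : untrop y ≠ ⊤ := by
    intro ht
    exact h0 (untrop_injective (by rw [Tropical.untrop_mul, ht, untrop_zero, add_top]))
  calc untrop x + untrop y < untrop x' + untrop y :=
        WithTop.add_lt_add_right hy (Tropical.untrop_lt_iff.2 h1)
    _ ≤ untrop x' + untrop y' := add_le_add le_rfl (Tropical.untrop_le_iff.2 h2)

lemma mul_lt_right {x x' y y' : TropR} (h1 : x ≤ x') (h2 : y < y') (h0 : x * y ≠ 0) :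
    x * y < x' * y' := by
  rw [mul_comm x y, mul_comm x' y']
  exact mul_lt_left h2 h1 (by rwa [mul_comm])

lemma tadd_le_right (x y : TropR) : x + y ≤ y := by
  rw [← Tropical.untrop_le_iff, Tropical.untrop_add]; exact min_le_right _ _

lemma tadd_le_left (x y : TropR) : x + y ≤ x := by
  rw [← Tropical.untrop_le_iff, Tropical.untrop_add]; exact min_le_left _ _

lemma add_mem_aux {a : WithTop ℝ} (f g : Polynomial TropR)
    (hev : f.eval (trop a) = (f + g).eval (trop a)) (hE : (f + g).eval (trop a) ≠ 0)
    (hf : a ∈ tropVa f) : a ∈ tropVa (f + g) := by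
  rcases hf with h0 | ⟨i, j, hij, hi, hj⟩
  · exact absurd (hev.symm.trans h0) hE
  have key : ∀ m, trmVal f a m = f.eval (trop a) →
      trmVal (f + g) a m = (f + g).eval (trop a) := by
    intro m hm
    have h1 : trmVal (f + g) a m = trmVal f a m + trmVal g a m := by
      unfold trmVal; rw [coeff_add, add_mul]
    have h2 : trmVal f a m ≤ trmVal g a m := by
      rw [hm, hev]
      exact le_trans (by rw [eval_add]; exact tadd_le_right _ _) (ev_le g a m)
    rw [h1, Tropical.add_eq_left h2, hm, hev]
  exact Or.inr ⟨i, j, hij, key i hi, key j hj⟩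

lemma add_mem_tropVa {a : WithTop ℝ} {f g : Polynomial TropR}
    (hf : a ∈ tropVa f) (hg : a ∈ tropVa g) : a ∈ tropVa (f + g) := by
  by_cases hE : (f + g).eval (trop a) = 0
  · exact Or.inl hE
  have hmin : f.eval (trop a) + g.eval (trop a) = f.eval (trop a) ∨
      f.eval (trop a) + g.eval (trop a) = g.eval (trop a) := by
    rcases le_total (f.eval (trop a)) (g.eval (trop a)) with h | h
    · exact Or.inl (Tropical.add_eq_left h)
    · exact Or.inr (Tropical.add_eq_right h)
  rcases hmin with h | h
  · exact add_mem_aux f g (by rw [eval_add, h]) hE hf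
  · rw [add_comm]
    exact add_mem_aux g f (by rw [eval_add, add_comm, h]) (by rwa [add_comm]) hg

set_option maxHeartbeats 1000000 in
lemma mul_mem_tropVa {a : WithTop ℝ} (c f : Polynomial TropR)
    (hf : a ∈ tropVa f) : a ∈ tropVa (c * f) := by
  rcases hf with h0 | ⟨i, j, hij, hi, hj⟩
  · exact Or.inl (by rw [eval_mul, h0, mul_zero])
  by_cases hc : c.eval (trop a) = 0
  · exact Or.inl (by rw [eval_mul, hc, zero_mul])
  obtain ⟨j₀, hj₀⟩ := exists_ev c a
  have key : ∀ m, trmVal f a m = f.eval (trop a) →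
      trmVal (c * f) a (j₀ + m) = (c * f).eval (trop a) := by
    intro m hm
    refine le_antisymm ?_ (ev_le _ _ _)
    rw [trmVal_mul]
    calc (∑ p ∈ Finset.HasAntidiagonal.antidiagonal (j₀ + m), trmVal c a p.1 * trmVal f a p.2)
        ≤ trmVal c a j₀ * trmVal f a m :=
          sum_le_of_mem (p := (j₀, m)) (by rw [Finset.HasAntidiagonal.mem_antidiagonal])
      _ = (c * f).eval (trop a) := by rw [hj₀, hm, eval_mul]
  exact Or.inr ⟨j₀ + i, j₀ + j, by omega, key i hi, key j hj⟩

lemma not_mem_mul_tropVa {a : WithTop ℝ} {f g : Polynomial TropR}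
    (hf : a ∉ tropVa f) (hg : a ∉ tropVa g) : a ∉ tropVa (f * g) := by
  simp only [tropVa, Set.mem_setOf_eq, not_or, not_exists] at hf hg
  push_neg at hf hg
  obtain ⟨hf0, hfu⟩ := hf
  obtain ⟨hg0, hgu⟩ := hg
  obtain ⟨i₀, hi₀⟩ := exists_ev f a
  obtain ⟨j₀, hj₀⟩ := exists_ev g a
  have huf : ∀ i, trmVal f a i = f.eval (trop a) → i = i₀ := by
    intro i hi; by_contra h; exact hfu i i₀ h hi hi₀
  have hug : ∀ j, trmVal g a j = g.eval (trop a) → j = j₀ := by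
    intro j hj; by_contra h; exact hgu j j₀ h hj hj₀
  intro hmem
  rcases hmem with h0 | ⟨k₁, k₂, hk, h1, h2⟩
  · rw [eval_mul] at h0
    rcases mul_eq_zero.1 h0 with h | h
    · exact hf0 h
    · exact hg0 h
  have claim : ∀ k, trmVal (f * g) a k = (f * g).eval (trop a) → k = i₀ + j₀ := by
    intro k hkv
    rw [trmVal_mul] at hkv
    have hne : (Finset.HasAntidiagonal.antidiagonal k).Nonempty := ⟨(0, k), by simp⟩
    obtain ⟨p, hp, hpv⟩ := Finset.exists_mem_eq_inf' hne
      (untrop ∘ fun p : ℕ × ℕ => trmVal f a p.1 * trmVal g a p.2)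
    have hprod : trmVal f a p.1 * trmVal g a p.2 =
        f.eval (trop a) * g.eval (trop a) := by
      refine untrop_injective ?_
      have : untrop (∑ p ∈ Finset.HasAntidiagonal.antidiagonal k, trmVal f a p.1 * trmVal g a p.2)
          = untrop (trmVal f a p.1 * trmVal g a p.2) := by
        rw [Finset.untrop_sum', ← Finset.inf'_eq_inf hne, hpv]; rfl
      rw [← this, hkv, eval_mul]
    have h0 : f.eval (trop a) * g.eval (trop a) ≠ 0 := mul_ne_zero hf0 hg0
    have hp1 : p.1 = i₀ := by
      by_contra hne1
      have hlt : f.eval (trop a) < trmVal f a p.1 :=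
        lt_of_le_of_ne (ev_le f a p.1) (fun he => hne1 (huf _ he.symm))
      exact absurd hprod (ne_of_gt (lt_of_lt_of_le
        (lt_of_eq_of_lt rfl (mul_lt_left hlt (ev_le g a p.2) h0)) le_rfl))
    have hp2 : p.2 = j₀ := by
      by_contra hne2
      have hlt : g.eval (trop a) < trmVal g a p.2 :=
        lt_of_le_of_ne (ev_le g a p.2) (fun he => hne2 (hug _ he.symm))
      exact absurd hprod (ne_of_gt (mul_lt_right (ev_le f a p.1) hlt h0))
    rw [Finset.HasAntidiagonal.mem_antidiagonal] at hp
    omega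
  exact hk ((claim k₁ h1).trans (claim k₂ h2).symm)

lemma one_not_mem_tropVa (a : WithTop ℝ) : a ∉ tropVa (1 : Polynomial TropR) := by
  intro h
  have h10 : (1 : TropR) ≠ 0 := by
    intro he
    have := congrArg untrop he
    rw [untrop_one, untrop_zero] at this
    exact (WithTop.zero_ne_top) this
  rcases h with h0 | ⟨i, j, hij, hi, hj⟩
  · rw [eval_one] at h0; exact h10 h0
  have key : ∀ m, trmVal 1 a m = (1 : Polynomial TropR).eval (trop a) → m = 0 := by
    intro m hm
    by_contra hm0
    rw [eval_one] at hm
    unfold trmVal at hm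
    rw [coeff_one, if_neg hm0, zero_mul] at hm
    exact h10 hm.symm
  exact hij ((key i hi).trans (key j hj).symm)

set_option maxHeartbeats 1000000 in
/-- For every `a ∈ ℝ ∪ {∞}`, the set `J_a` of univariate tropical polynomials `f` with
`a ∈ V(f)` is a prime ideal of the semiring `R̄[x]`. -/
theorem Ja_is_prime_ideal (a : WithTop ℝ) :
    ∃ P : Ideal (Polynomial TropR), (∀ f, f ∈ P ↔ a ∈ tropVa f) ∧ P.IsPrime := by
  refine ⟨{ carrier := {f | a ∈ tropVa f}
            add_mem' := fun hf hg => add_mem_tropVa hf hg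
            zero_mem' := Or.inl (by rw [eval_zero])
            smul_mem' := fun c x hx => by
              simp only [Set.mem_setOf_eq, smul_eq_mul]
              exact mul_mem_tropVa c x hx },
    fun f => Iff.rfl, ?_, ?_⟩
  · intro h
    exact one_not_mem_tropVa a ((Ideal.eq_top_iff_one _).1 h)
  · intro f g hfg
    by_contra h
    push_neg at h
    exact not_mem_mul_tropVa h.1 h.2 hfg
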